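/- Let F be a finite index set and let {a_j}_{j∈F} be pairwise orthogonal nonzero vectors in ℂ^N (a_jᴴ a_i = 0 for i ≠ j in F), let {b_j}_{j∈F} ⊆ ℂ, and let x ∈ ℂ^N. For each j ∈ F set r_j = b_j − a_jᴴ x and φ_j = r_j/‖a_j‖₂², and assume not all r_j are zero. Let d = Σ_{j∈F} φ_j·a_j and c = Σ_{j∈F} conj(φ_j)·r_j, and define x' = x + (c/‖d‖₂²)·d. Then x' = x + Σ_{j∈F} φ_j·a_j; i.e., the aggregation step reduces to a sum of independent single-row Kaczmarz corrections that can be computed in parallel. -/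
import Mathlib

open scoped BigOperators

noncomputable section

/-- Hermitian inner product aᴴb = ∑ conj(aₙ)·bₙ on complex vectors. -/
def hIP {ι : Type*} [Fintype ι] (a y : ι → ℂ) : ℂ := ∑ n, (starRingEnd ℂ) (a n) * y n

/-- Squared Euclidean norm of a complex vector. -/
def sqNorm {ι : Type*} [Fintype ι] (a : ι → ℂ) : ℝ := ∑ n, Complex.normSq (a n)

lemma sqNorm_eq_hIP {ι : Type*} [Fintype ι] (v : ι → ℂ) : (sqNorm v : ℂ) = hIP v v := by
  simp [sqNorm, hIP, Complex.normSq_eq_conj_mul_self]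

lemma sqNorm_ne_zero {ι : Type*} [Fintype ι] {v : ι → ℂ} (hv : v ≠ 0) : sqNorm v ≠ 0 := by
  intro h
  apply hv
  funext n
  have h0 := (Finset.sum_eq_zero_iff_of_nonneg (fun i _ => Complex.normSq_nonneg (v i))).1 h
  have := h0 n (Finset.mem_univ n)
  simpa [Complex.normSq_eq_zero] using this

lemma hIP_sum_left {ι κ : Type*} [Fintype ι] [Fintype κ] (c : κ → ℂ) (v : κ → ι → ℂ)
    (w : ι → ℂ) :
    hIP (∑ j, c j • v j) w = ∑ j, (starRingEnd ℂ) (c j) * hIP (v j) w := by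
  simp only [hIP, Finset.sum_apply, Pi.smul_apply, smul_eq_mul, map_sum, map_mul,
    Finset.sum_mul, Finset.mul_sum]
  rw [Finset.sum_comm]
  exact Finset.sum_congr rfl fun j _ => Finset.sum_congr rfl fun n _ => by ring

lemma hIP_sum_right {ι κ : Type*} [Fintype ι] [Fintype κ] (c : κ → ℂ) (v : κ → ι → ℂ)
    (w : ι → ℂ) :
    hIP w (∑ i, c i • v i) = ∑ i, c i * hIP w (v i) := by
  simp only [hIP, Finset.sum_apply, Pi.smul_apply, smul_eq_mul, Finset.mul_sum]
  rw [Finset.sum_comm]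
  exact Finset.sum_congr rfl fun i _ => Finset.sum_congr rfl fun n _ => by ring

/-- Proposition 1 of the paper: on a pairwise orthogonal family, the aggregation-hyperplane
Kaczmarz step reduces to a sum of independent single-row Kaczmarz corrections. -/
theorem ahk_orthogonal_parallel_form (N : ℕ) (ι : Type) [Fintype ι]
    (a : ι → Fin N → ℂ) (ha : ∀ j, a j ≠ 0)
    (horth : ∀ i j : ι, i ≠ j → hIP (a j) (a i) = 0)
    (b : ι → ℂ) (x : Fin N → ℂ)
    (r φ : ι → ℂ)
    (hr : ∀ j, r j = b j - hIP (a j) x)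
    (hφ : ∀ j, φ j = r j / (sqNorm (a j) : ℂ))
    (hr0 : ∃ j, r j ≠ 0)
    (d : Fin N → ℂ) (hd : d = ∑ j, φ j • a j)
    (c : ℂ) (hc : c = ∑ j, (starRingEnd ℂ) (φ j) * r j)
    (x' : Fin N → ℂ) (hx' : x' = x + (c / (sqNorm d : ℂ)) • d) :
    x' = x + ∑ j, φ j • a j := by
  have hsq : ∀ j, (sqNorm (a j) : ℂ) ≠ 0 := fun j => by
    exact_mod_cast sqNorm_ne_zero (ha j)
  have hkey : ∀ j, φ j * (sqNorm (a j) : ℂ) = r j := fun j => by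
    rw [hφ, div_mul_cancel₀ _ (hsq j)]
  have hdd : (sqNorm d : ℂ) = c := by
    rw [sqNorm_eq_hIP, hc, hd, hIP_sum_left]
    refine Finset.sum_congr rfl fun j _ => ?_
    rw [hIP_sum_right, Finset.sum_eq_single j]
    · rw [← sqNorm_eq_hIP, hkey]
    · intro i _ hij
      simp [horth i j hij]
    · intro h; exact absurd (Finset.mem_univ j) h
  have hcnz : c ≠ 0 := by
    have hcr : c = ((∑ j, Complex.normSq (r j) / sqNorm (a j) : ℝ) : ℂ) := by
      rw [hc]
      push_cast
      refine Finset.sum_congr rfl fun j _ => ?_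
      rw [hφ, map_div₀, Complex.conj_ofReal, div_mul_eq_mul_div,
        ← Complex.normSq_eq_conj_mul_self]
    obtain ⟨j0, hj0⟩ := hr0
    have hpos : (0:ℝ) < ∑ j, Complex.normSq (r j) / sqNorm (a j) := by
      refine Finset.sum_pos' (fun j _ => div_nonneg (Complex.normSq_nonneg _) ?_)
        ⟨j0, Finset.mem_univ j0, ?_⟩
      · exact Finset.sum_nonneg fun n _ => Complex.normSq_nonneg _
      · exact div_pos (by simpa [Complex.normSq_pos] using hj0)
          (lt_of_le_of_ne (Finset.sum_nonneg fun n _ => Complex.normSq_nonneg _)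
            (Ne.symm (sqNorm_ne_zero (ha j0))))
    rw [hcr]
    exact_mod_cast hpos.ne'
  rw [hx', hdd, div_self hcnz, one_smul, hd]
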